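/- Let Z be a real n×p matrix with ᵀZ·Z < 1_p, and set H = (1_n − Z·ᵀZ)⁻¹ and K = (1_p − ᵀZ·Z)⁻¹. Then for every real n×p matrix W: tr(W·ᵀW) ≤ tr(H·W·K·ᵀW) ≤ det(1_p − ᵀZ·Z)^{−2} · tr(W·ᵀW). -/

import Mathlib

open Matrix

/-- Trace of a positive semidefinite matrix is nonnegative. -/
lemma aux_trace_nonneg {m : ℕ} {P : Matrix (Fin m) (Fin m) ℝ} (hP : P.PosSemidef) :
    0 ≤ P.trace := by
  rw [Matrix.trace]
  refine Finset.sum_nonneg fun i _ => ?_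
  exact hP.diag_nonneg

open scoped MatrixOrder in
/-- Trace of a product of positive semidefinite matrices is nonnegative. -/
lemma aux_trace_mul_nonneg {m : ℕ} {P Q : Matrix (Fin m) (Fin m) ℝ}
    (hP : P.PosSemidef) (hQ : Q.PosSemidef) : 0 ≤ (P * Q).trace := by
  have hs : CFC.sqrt P * CFC.sqrt P = P := CFC.sqrt_mul_sqrt_self P hP.nonneg
  have hherm : (CFC.sqrt P)ᴴ = CFC.sqrt P := (CFC.sqrt_nonneg P).posSemidef.1
  have key : (P * Q).trace = (CFC.sqrt P * Q * (CFC.sqrt P)ᴴ).trace := by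
    conv_lhs => rw [← hs]
    rw [hherm, mul_assoc, trace_mul_comm]
  rw [key]
  exact aux_trace_nonneg (hQ.mul_mul_conjTranspose_same (CFC.sqrt P))

/-- Key spectral lemma: if `M` is PSD with nonzero determinant and `1 - M` is PSD,
then `M⁻¹ - 1` and `(det M)⁻¹ • 1 - M⁻¹` are PSD. -/
lemma aux_key {m : ℕ} {M : Matrix (Fin m) (Fin m) ℝ} (hM : M.PosSemidef) (hd : M.det ≠ 0)
    (h1 : ((1 : Matrix (Fin m) (Fin m) ℝ) - M).PosSemidef) :
    (M⁻¹ - 1).PosSemidef ∧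
      ((M.det)⁻¹ • (1 : Matrix (Fin m) (Fin m) ℝ) - M⁻¹).PosSemidef := by
  have hH := hM.1
  set U : Matrix (Fin m) (Fin m) ℝ := (hH.eigenvectorUnitary : Matrix (Fin m) (Fin m) ℝ) with hU
  set lam : Fin m → ℝ := hH.eigenvalues with hlam
  have hspec : M = U * diagonal lam * Uᴴ := hH.spectral_theorem
  have hUUh : U * Uᴴ = 1 := Matrix.mem_unitaryGroup_iff.mp hH.eigenvectorUnitary.2
  have hUhU : Uᴴ * U = 1 := Matrix.mem_unitaryGroup_iff'.mp hH.eigenvectorUnitary.2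
  have hdet : M.det = ∏ i, lam i := hH.det_eq_prod_eigenvalues
  have hnonneg : ∀ i, 0 ≤ lam i := fun i => hM.eigenvalues_nonneg i
  have hpos : ∀ i, 0 < lam i := by
    intro i
    rcases lt_or_eq_of_le (hnonneg i) with h | h
    · exact h
    · exact absurd (by rw [hdet, ← Finset.prod_erase_mul _ _ (Finset.mem_univ i), ← h,
        mul_zero]) hd
  have hUMU : Uᴴ * M * U = diagonal lam := by
    rw [hspec]
    have h6 : Uᴴ * (U * diagonal lam * Uᴴ) * U = Uᴴ * U * diagonal lam * (Uᴴ * U) := by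
      simp only [mul_assoc]
    rw [h6, hUhU, one_mul, mul_one]
  have hle : ∀ i, lam i ≤ 1 := by
    have h2 := h1.conjTranspose_mul_mul_same U
    have h3 : Uᴴ * (1 - M) * U = diagonal (fun i => 1 - lam i) := by
      rw [mul_sub, sub_mul, mul_one, hUMU, hUhU]
      rw [show (1 : Matrix (Fin m) (Fin m) ℝ) = diagonal (fun _ => 1) from (diagonal_one).symm,
        ← diagonal_sub]
    rw [h3] at h2
    intro i
    have := posSemidef_diagonal_iff.mp h2 i
    linarith
  have hMinv : M⁻¹ = U * diagonal (fun i => (lam i)⁻¹) * Uᴴ := by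
    apply inv_eq_right_inv
    rw [hspec]
    calc U * diagonal lam * Uᴴ * (U * diagonal (fun i => (lam i)⁻¹) * Uᴴ)
        = U * (diagonal lam * (Uᴴ * U) * diagonal (fun i => (lam i)⁻¹)) * Uᴴ := by
          simp only [mul_assoc]
      _ = U * (diagonal lam * diagonal (fun i => (lam i)⁻¹)) * Uᴴ := by rw [hUhU, mul_one]
      _ = U * Uᴴ := by
          rw [diagonal_mul_diagonal]
          have h7 : (fun i => lam i * (lam i)⁻¹) = fun _ => (1 : ℝ) := by
            funext i; exact mul_inv_cancel₀ (hpos i).ne'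
          rw [h7, diagonal_one, mul_one]
      _ = 1 := hUUh
  have hprodpos : 0 < ∏ i, lam i := Finset.prod_pos fun i _ => hpos i
  have hprodle : ∀ i, ∏ j, lam j ≤ lam i := by
    intro i
    rw [← Finset.prod_erase_mul _ _ (Finset.mem_univ i)]
    have h4 : ∏ j ∈ Finset.univ.erase i, lam j ≤ 1 :=
      Finset.prod_le_one (fun j _ => (hnonneg j)) (fun j _ => hle j)
    nlinarith [hpos i]
  constructor
  · have e1 : M⁻¹ - 1 = U * diagonal (fun i => (lam i)⁻¹ - 1) * Uᴴ := by
      rw [hMinv]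
      rw [show (1 : Matrix (Fin m) (Fin m) ℝ) = U * diagonal (fun _ => 1) * Uᴴ by
        rw [diagonal_one, mul_one, hUUh]]
      rw [← sub_mul, ← mul_sub, ← diagonal_sub]
    rw [e1]
    refine (posSemidef_diagonal_iff.mpr fun i => ?_).mul_mul_conjTranspose_same U
    rw [sub_nonneg]
    rw [le_inv_comm₀ one_pos (hpos i)]
    simpa using hle i
  · have hsmul : (M.det)⁻¹ • (1 : Matrix (Fin m) (Fin m) ℝ) =
        U * diagonal (fun _ : Fin m => (M.det)⁻¹) * Uᴴ := by
      rw [show (diagonal (fun _ : Fin m => (M.det)⁻¹)) =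
          (M.det)⁻¹ • (1 : Matrix (Fin m) (Fin m) ℝ) from (smul_one_eq_diagonal _).symm,
        mul_smul_comm, smul_mul_assoc, mul_one, hUUh]
    have e2 : (M.det)⁻¹ • (1 : Matrix (Fin m) (Fin m) ℝ) - M⁻¹ =
        U * diagonal (fun i => (M.det)⁻¹ - (lam i)⁻¹) * Uᴴ := by
      rw [hMinv, hsmul, ← sub_mul, ← mul_sub, ← diagonal_sub]
    rw [e2]
    refine (posSemidef_diagonal_iff.mpr fun i => ?_).mul_mul_conjTranspose_same U
    rw [sub_nonneg, hdet]
    exact inv_anti₀ hprodpos (hprodle i)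

/-- Comparison of the invariant metric `tr(H W K ᵀW)` (with `H = (1−ZᵀZᵀ…)⁻¹`,
`K = (1−ᵀZZ)⁻¹`) with the Euclidean metric `tr(W ᵀW)`. -/
theorem stmt_16 (n p : ℕ) (Z : Matrix (Fin n) (Fin p) ℝ)
    (hZ : ((1 : Matrix (Fin p) (Fin p) ℝ) - Zᵀ * Z).PosDef)
    (W : Matrix (Fin n) (Fin p) ℝ) :
    (W * Wᵀ).trace ≤
        (((1 : Matrix (Fin n) (Fin n) ℝ) - Z * Zᵀ)⁻¹ * W *
          ((1 : Matrix (Fin p) (Fin p) ℝ) - Zᵀ * Z)⁻¹ * Wᵀ).trace ∧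
      (((1 : Matrix (Fin n) (Fin n) ℝ) - Z * Zᵀ)⁻¹ * W *
          ((1 : Matrix (Fin p) (Fin p) ℝ) - Zᵀ * Z)⁻¹ * Wᵀ).trace ≤
        ((1 : Matrix (Fin p) (Fin p) ℝ) - Zᵀ * Z).det ^ (-2 : ℤ) * (W * Wᵀ).trace := by
  set A : Matrix (Fin n) (Fin n) ℝ := 1 - Z * Zᵀ with hA
  set B : Matrix (Fin p) (Fin p) ℝ := 1 - Zᵀ * Z with hB
  have hZt : Zᴴ = Zᵀ := Matrix.conjTranspose_eq_transpose_of_trivial Z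
  have hWt : Wᴴ = Wᵀ := Matrix.conjTranspose_eq_transpose_of_trivial W
  -- B is PSD with positive determinant
  have hBdet : 0 < B.det := hZ.det_pos
  have hB1 : ((1 : Matrix (Fin p) (Fin p) ℝ) - B).PosSemidef := by
    have h : (1 : Matrix (Fin p) (Fin p) ℝ) - B = Zᴴ * Z := by
      rw [hZt, hB, sub_sub_cancel]
    rw [h]; exact posSemidef_conjTranspose_mul_self Z
  -- A is PSD via Schur complements
  haveI : Invertible (1 : Matrix (Fin n) (Fin n) ℝ) := invertibleOne
  haveI : Invertible (1 : Matrix (Fin p) (Fin p) ℝ) := invertibleOne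
  have hApsd : A.PosSemidef := by
    have h1 : (fromBlocks (1 : Matrix (Fin n) (Fin n) ℝ) Z Zᴴ 1).PosSemidef := by
      rw [PosDef.fromBlocks₁₁ Z 1 Matrix.PosDef.one]
      simpa [hZt] using hZ.posSemidef
    have h2 := (PosDef.fromBlocks₂₂ (1 : Matrix (Fin n) (Fin n) ℝ) Z
      Matrix.PosDef.one).mp h1
    simpa [hZt] using h2
  have hAdet : A.det = B.det := det_one_sub_mul_comm Z Zᵀ
  have hA1 : ((1 : Matrix (Fin n) (Fin n) ℝ) - A).PosSemidef := by
    have h : (1 : Matrix (Fin n) (Fin n) ℝ) - A = Z * Zᴴ := by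
      rw [hZt, hA, sub_sub_cancel]
    rw [h]; exact posSemidef_self_mul_conjTranspose Z
  obtain ⟨hK1, hKc⟩ := aux_key hZ.posSemidef hBdet.ne' hB1
  obtain ⟨hH1, hHc'⟩ := aux_key hApsd (by rw [hAdet]; exact hBdet.ne') hA1
  rw [hAdet] at hHc'
  set H : Matrix (Fin n) (Fin n) ℝ := A⁻¹ with hHdef
  set K : Matrix (Fin p) (Fin p) ℝ := B⁻¹ with hKdef
  set c : ℝ := (B.det)⁻¹ with hc
  have hcpos : 0 < c := inv_pos.mpr hBdet
  have hKpsd : K.PosSemidef := by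
    have h : K = (K - 1) + 1 := by abel
    rw [h]; exact hK1.add (PosSemidef.one)
  have hWKW : (W * K * Wᵀ).PosSemidef := by
    have h := hKpsd.mul_mul_conjTranspose_same W
    rwa [hWt] at h
  have hWtW : (Wᵀ * W).PosSemidef := by
    have h := posSemidef_conjTranspose_mul_self W
    rwa [hWt] at h
  have t1 : (W * K * Wᵀ).trace = (K * (Wᵀ * W)).trace := by
    rw [trace_mul_comm, ← Matrix.mul_assoc, trace_mul_comm]
  have t2 : (Wᵀ * W).trace = (W * Wᵀ).trace := trace_mul_comm _ _
  have t3 : (H * W * K * Wᵀ).trace = (H * (W * K * Wᵀ)).trace := by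
    simp only [Matrix.mul_assoc]
  -- trace identities
  have e1 : (W * K * Wᵀ).trace = ((K - 1) * (Wᵀ * W)).trace + (W * Wᵀ).trace := by
    rw [sub_mul, one_mul, trace_sub, t1, t2]; ring
  have e2 : (H * W * K * Wᵀ).trace =
      ((H - 1) * (W * K * Wᵀ)).trace + (W * K * Wᵀ).trace := by
    rw [sub_mul, one_mul, trace_sub, t3]; ring
  have lower : (W * Wᵀ).trace ≤ (H * W * K * Wᵀ).trace := by
    have n1 : 0 ≤ ((K - 1) * (Wᵀ * W)).trace := aux_trace_mul_nonneg hK1 hWtW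
    have n2 : 0 ≤ ((H - 1) * (W * K * Wᵀ)).trace := aux_trace_mul_nonneg hH1 hWKW
    rw [e2, e1]; linarith
  have upper : (H * W * K * Wᵀ).trace ≤ c * (c * (W * Wᵀ).trace) := by
    have n3 : 0 ≤ ((c • 1 - H) * (W * K * Wᵀ)).trace := aux_trace_mul_nonneg hHc' hWKW
    have n4 : 0 ≤ ((c • 1 - K) * (Wᵀ * W)).trace := aux_trace_mul_nonneg hKc hWtW
    have s3 : ((c • 1 - H) * (W * K * Wᵀ)).trace =
        c * (W * K * Wᵀ).trace - (H * (W * K * Wᵀ)).trace := by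
      rw [sub_mul, trace_sub, smul_mul_assoc, one_mul, trace_smul, smul_eq_mul]
    have s4 : ((c • 1 - K) * (Wᵀ * W)).trace =
        c * (Wᵀ * W).trace - (K * (Wᵀ * W)).trace := by
      rw [sub_mul, trace_sub, smul_mul_assoc, one_mul, trace_smul, smul_eq_mul]
    rw [s3] at n3; rw [s4] at n4
    have hX : (W * K * Wᵀ).trace ≤ c * (W * Wᵀ).trace := by
      rw [t1, ← t2]; linarith
    have := mul_le_mul_of_nonneg_left hX hcpos.le
    rw [t3]; linarith
  refine ⟨lower, ?_⟩
  have hpow : B.det ^ (-2 : ℤ) = c * c := by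
    rw [hc, _root_.zpow_neg, zpow_two, mul_inv]
  rw [hpow, mul_assoc]
  exact upper
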